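/- Let k be a field, let x_1, …, x_r be elements of k, and let 1 ≤ s ≤ r. Let A_r^s be the s × r matrix whose (d, j)-entry (for 0 ≤ d ≤ s−1 and 1 ≤ j ≤ r) is e_{r,j}^{d}, the elementary symmetric polynomial of degree d in the r − 1 elements x_1, …, x_r with x_j omitted. Then A_r^s has full rank s if and only if the set {x_1, …, x_r} has at least s distinct elements. -/

import Mathlib

open Polynomial Finset Matrix

section Aux

variable {k : Type*} [Field k]

lemma mesymm_zero (s : Multiset k) : s.esymm 0 = 1 := by
  simp [Multiset.esymm, Multiset.powersetCard_zero_left]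

lemma mesymm_cons (a : k) (s : Multiset k) (n : ℕ) :
    (a ::ₘ s).esymm (n + 1) = s.esymm (n + 1) + a * s.esymm n := by
  rw [Multiset.esymm, Multiset.powersetCard_cons, Multiset.map_add, Multiset.sum_add,
    Multiset.map_map]
  congr 1
  rw [Multiset.esymm, ← Multiset.sum_map_mul_left]
  exact congrArg _ (Multiset.map_congr rfl fun t _ => Multiset.prod_cons a t)

lemma genpoly_coeff (s : Multiset k) :
    ∀ n, ((s.map fun c => 1 + C c * X).prod).coeff n = s.esymm n := by
  induction s using Multiset.induction_on with
  | empty =>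
    intro n
    cases n with
    | zero => simp [mesymm_zero]
    | succ n => simp [Multiset.esymm, Multiset.powersetCard_zero_right, Polynomial.coeff_one]
  | cons a s ih =>
    intro n
    rw [Multiset.map_cons, Multiset.prod_cons]
    cases n with
    | zero =>
      rw [Polynomial.mul_coeff_zero, ih, mesymm_zero, mesymm_zero]
      simp
    | succ n =>
      rw [add_mul, one_mul, mul_assoc, Polynomial.coeff_add, Polynomial.coeff_C_mul,
        Polynomial.coeff_X_mul, ih, ih, mesymm_cons]

lemma mesymm_add (u v : Multiset k) (n : ℕ) :
    (u + v).esymm n = ∑ ij ∈ Finset.HasAntidiagonal.antidiagonal n, u.esymm ij.1 * v.esymm ij.2 := by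
  have h := genpoly_coeff (u + v) n
  rw [Multiset.map_add, Multiset.prod_add, Polynomial.coeff_mul] at h
  simp_rw [genpoly_coeff] at h
  exact h.symm

lemma erase_map_eq' {r : ℕ} [DecidableEq k] (x : Fin r → k) (j : Fin r) :
    ((Finset.univ.erase j).val.map x) = (Finset.univ.val.map x).erase (x j) := by
  rw [Finset.erase_val]
  have h : (Finset.univ.val : Multiset (Fin r)) = j ::ₘ Finset.univ.val.erase j :=
    (Multiset.cons_erase (Finset.mem_univ j)).symm
  conv_rhs => rw [h, Multiset.map_cons, Multiset.erase_cons_head]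

lemma det_esymm_ne_zero {s : ℕ} (hs : 1 ≤ s) (y : Fin s → k) (hy : Function.Injective y) :
    (Matrix.of fun (a t : Fin s) =>
      (((Finset.univ.erase t).val.map y).esymm (a : ℕ))).det ≠ 0 := by
  classical
  set Cm : Matrix (Fin s) (Fin s) k :=
    Matrix.of fun (a t : Fin s) => (((Finset.univ.erase t).val.map y).esymm (a : ℕ)) with hCm
  set W : Matrix (Fin s) (Fin s) k :=
    Matrix.of fun (a l : Fin s) => (-1 : k) ^ (a : ℕ) * y l ^ (s - 1 - (a : ℕ)) with hW
  set D : Fin s → k := fun t =>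
    (((Finset.univ.erase t).val.map y).map fun c => y t - c).prod with hD
  have hcard : ∀ t : Fin s, Multiset.card ((Finset.univ.erase t).val.map y) = s - 1 := by
    intro t
    rw [Multiset.card_map]
    have h : (Finset.univ.erase t).card = s - 1 := by simp
    exact h
  have key : Cmᵀ * W = Matrix.diagonal D := by
    ext t l
    set T : Multiset k := (Finset.univ.erase t).val.map y with hT
    set p : Polynomial k := (T.map fun c => Polynomial.X - Polynomial.C c).prod with hp
    have hdeg : p.natDegree = s - 1 := by
      rw [hp, Polynomial.natDegree_multiset_prod_X_sub_C_eq_card, hcard]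
    have heval : p.eval (y l) = (T.map fun c => y l - c).prod := by
      rw [hp, Polynomial.eval_multiset_prod, Multiset.map_map]
      congr 1
      exact Multiset.map_congr rfl fun c _ => by simp
    have hmul : (Cmᵀ * W) t l = (T.map fun c => y l - c).prod := by
      rw [← heval, Polynomial.eval_eq_sum_range' (n := s) (by omega) (y l)]
      rw [Matrix.mul_apply]
      have hsum : ∀ a : Fin s, Cmᵀ t a * W a l
          = T.esymm (a : ℕ) * ((-1 : k) ^ (a : ℕ) * y l ^ (s - 1 - (a : ℕ))) := fun a => rfl
      simp_rw [hsum]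
      rw [Fin.sum_univ_eq_sum_range
        (fun a => T.esymm a * ((-1 : k) ^ a * y l ^ (s - 1 - a))) s]
      rw [← Finset.sum_range_reflect]
      refine Finset.sum_congr rfl fun i hi => ?_
      rw [Finset.mem_range] at hi
      have h1 : s - 1 - (s - 1 - i) = i := by omega
      have h2 : i ≤ Multiset.card T := by rw [hcard]; omega
      rw [h1, Multiset.prod_X_sub_C_coeff T h2, hcard]
      ring
    rw [hmul]
    rcases eq_or_ne l t with h | h
    · subst h
      rw [Matrix.diagonal_apply_eq]
    · rw [Matrix.diagonal_apply_ne _ (Ne.symm h)]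
      refine Multiset.prod_eq_zero ?_
      rw [Multiset.mem_map]
      exact ⟨y l, Multiset.mem_map_of_mem y (by simp [Multiset.mem_erase_of_ne h]), sub_self _⟩
  have hDne : ∀ t, D t ≠ 0 := by
    intro t
    refine Multiset.prod_ne_zero ?_
    rw [Multiset.mem_map]
    rintro ⟨c, hc, hc0⟩
    rw [Multiset.mem_map] at hc
    obtain ⟨u, hu, rfl⟩ := hc
    rw [Finset.mem_val, Finset.mem_erase] at hu
    exact hu.1 (hy ((sub_eq_zero.mp hc0).symm))
  have hdet : Cmᵀ.det * W.det ≠ 0 := by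
    rw [← Matrix.det_mul, key, Matrix.det_diagonal]
    exact Finset.prod_ne_zero_iff.mpr fun t _ => hDne t
  have := left_ne_zero_of_mul hdet
  rwa [Matrix.det_transpose] at this

lemma det_erase_esymm_ne_zero {s : ℕ} (hs : 1 ≤ s) [DecidableEq k] (M : Multiset k)
    (y : Fin s → k) (hy : Function.Injective y) (hyM : ∀ i, y i ∈ M) :
    (Matrix.of fun (a i : Fin s) => ((M.erase (y i)).esymm (a : ℕ))).det ≠ 0 := by
  set Ym : Multiset k := Finset.univ.val.map y with hYm
  have hnodup : Ym.Nodup := Multiset.Nodup.map hy Finset.univ.nodup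
  have hle : Ym ≤ M := (Multiset.le_iff_subset hnodup).mpr (by
    intro c hc
    rw [hYm, Multiset.mem_map] at hc
    obtain ⟨i, _, rfl⟩ := hc
    exact hyM i)
  set N : Multiset k := M - Ym with hN
  have hM : N + Ym = M := tsub_add_cancel_of_le hle
  have herase : ∀ i : Fin s, M.erase (y i) = ((Finset.univ.erase i).val.map y) + N := by
    intro i
    rw [← hM, Multiset.erase_add_right_pos _ (Multiset.mem_map_of_mem y (Finset.mem_univ i)),
      erase_map_eq', add_comm]
  set L : Matrix (Fin s) (Fin s) k :=
    Matrix.of fun (d a : Fin s) => if (a : ℕ) ≤ (d : ℕ) then N.esymm ((d : ℕ) - (a : ℕ)) else 0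
    with hL
  set Cm : Matrix (Fin s) (Fin s) k :=
    Matrix.of fun (a t : Fin s) => (((Finset.univ.erase t).val.map y).esymm (a : ℕ)) with hCm
  have hfact : (Matrix.of fun (a i : Fin s) => ((M.erase (y i)).esymm (a : ℕ))) = L * Cm := by
    ext d i
    rw [Matrix.mul_apply]
    have h1 : (Matrix.of fun (a i : Fin s) => ((M.erase (y i)).esymm (a : ℕ))) d i
        = ∑ b ∈ Finset.range ((d : ℕ) + 1),
            ((Finset.univ.erase i).val.map y).esymm b * N.esymm ((d : ℕ) - b) := by
      show (M.erase (y i)).esymm (d : ℕ) = _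
      rw [herase i, mesymm_add, Finset.Nat.sum_antidiagonal_eq_sum_range_succ_mk]
    rw [h1]
    have h2 : ∀ a : Fin s, L d a * Cm a i
        = (fun b : ℕ => if b ≤ (d : ℕ) then
            ((Finset.univ.erase i).val.map y).esymm b * N.esymm ((d : ℕ) - b) else 0) (a : ℕ) := by
      intro a
      show (if (a : ℕ) ≤ (d : ℕ) then N.esymm ((d : ℕ) - (a : ℕ)) else 0)
          * ((Finset.univ.erase i).val.map y).esymm (a : ℕ) = _
      by_cases h : (a : ℕ) ≤ (d : ℕ) <;> simp [h, mul_comm]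
    rw [Finset.sum_congr rfl fun a _ => h2 a]
    rw [Fin.sum_univ_eq_sum_range (fun b : ℕ => if b ≤ (d : ℕ) then
        ((Finset.univ.erase i).val.map y).esymm b * N.esymm ((d : ℕ) - b) else 0) s]
    rw [← Finset.sum_subset (Finset.range_subset_range.mpr (show (d : ℕ) + 1 ≤ s from d.2))
      (fun b _ hb => by
        rw [Finset.mem_range, not_lt] at hb
        rw [if_neg (by omega)])]
    exact Finset.sum_congr rfl fun b hb => by
      rw [Finset.mem_range] at hb
      rw [if_pos (by omega)]
  have hLdet : L.det = 1 := by
    have htri : L.BlockTriangular OrderDual.toDual := by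
      intro i j hij
      have hij' : i < j := hij
      have h1 : ¬ ((j : ℕ) ≤ (i : ℕ)) := by exact_mod_cast not_le.mpr hij'
      simp [hL, h1, not_le.mpr hij']
    rw [Matrix.det_of_lowerTriangular L htri]
    refine Finset.prod_eq_one fun i _ => ?_
    simp [hL, mesymm_zero]
  rw [hfact, Matrix.det_mul, hLdet, one_mul]
  exact det_esymm_ne_zero hs y hy

end Aux

/-- The `s × r` matrix over a field `k` whose `(d, j)` entry is the
elementary symmetric polynomial of degree `d` evaluated at the `r - 1` elements
`x 0, …, x (r-1)` with `x j` omitted has full rank `s` if and only if the set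
`{x 0, …, x (r-1)}` has at least `s` distinct elements. -/
theorem rank_esymm_omit_matrix {k : Type*} [Field k] (r : ℕ) (x : Fin r → k)
    (s : ℕ) (hs : 1 ≤ s) (hsr : s ≤ r) :
    (Matrix.of fun (d : Fin s) (j : Fin r) =>
        (((Finset.univ.erase j).val.map x).esymm (d : ℕ))).rank = s ↔
      s ≤ Set.ncard (Set.range x) := by
  classical
  set A : Matrix (Fin s) (Fin r) k := Matrix.of fun (d : Fin s) (j : Fin r) =>
      (((Finset.univ.erase j).val.map x).esymm (d : ℕ)) with hA
  set M : Multiset k := Finset.univ.val.map x with hM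
  have hAcol : ∀ j : Fin r, Aᵀ j = fun d : Fin s => (M.erase (x j)).esymm (d : ℕ) := by
    intro j
    funext d
    show ((Finset.univ.erase j).val.map x).esymm (d : ℕ) = _
    rw [erase_map_eq']
  have hfin : (Set.range x).Finite := Set.finite_range x
  constructor
  · intro hrank
    by_contra hcon
    push_neg at hcon
    set F : Finset k := hfin.toFinset with hF
    set col : k → (Fin s → k) := fun c d => (M.erase c).esymm (d : ℕ) with hcol
    have hsub : Set.range Aᵀ ⊆ ↑(F.image col) := by
      rintro v ⟨j, rfl⟩
      rw [hAcol j]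
      exact Finset.mem_coe.mpr (Finset.mem_image.mpr ⟨x j, hfin.mem_toFinset.mpr ⟨j, rfl⟩, rfl⟩)
    have hle : A.rank ≤ (F.image col).card := by
      rw [Matrix.rank_eq_finrank_span_cols]
      exact le_trans (Submodule.finrank_mono (Submodule.span_mono hsub))
        (finrank_span_finset_le_card _)
    have hFcard : F.card = (Set.range x).ncard := (Set.ncard_eq_toFinset_card _ hfin).symm
    have : A.rank < s :=
      lt_of_le_of_lt (hle.trans ((Finset.card_image_le).trans hFcard.le)) hcon
    omega
  · intro hcard
    have hsF : s ≤ hfin.toFinset.card := by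
      rwa [Set.ncard_eq_toFinset_card _ hfin] at hcard
    obtain ⟨u, huF, hucard⟩ := Finset.exists_subset_card_eq hsF
    let e := u.equivFinOfCardEq hucard
    set y : Fin s → k := fun i => ((e.symm i : u) : k) with hy
    have hyinj : Function.Injective y := fun i j h => by
      apply e.symm.injective
      exact Subtype.ext h
    have hymem : ∀ i : Fin s, y i ∈ Set.range x := fun i =>
      hfin.mem_toFinset.mp (huF (e.symm i).2)
    have hyM : ∀ i, y i ∈ M := by
      intro i
      obtain ⟨j, hj⟩ := hymem i
      rw [hM, Multiset.mem_map]
      exact ⟨j, Finset.mem_val.mpr (Finset.mem_univ j), hj⟩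
    set B : Matrix (Fin s) (Fin s) k :=
      Matrix.of fun (a i : Fin s) => ((M.erase (y i)).esymm (a : ℕ)) with hB
    have hBdet := det_erase_esymm_ne_zero hs M y hyinj hyM
    have hBrank : B.rank = s := by
      rw [Matrix.rank_of_isUnit B
        ((Matrix.isUnit_iff_isUnit_det B).mpr (isUnit_iff_ne_zero.mpr hBdet)), Fintype.card_fin]
    have hchoose : ∀ i : Fin s, ∃ j : Fin r, x j = y i := fun i => hymem i
    choose σ hσ using hchoose
    have hcols : ∀ i : Fin s, Bᵀ i = Aᵀ (σ i) := by
      intro i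
      rw [hAcol (σ i), hσ i]
      rfl
    have hle : B.rank ≤ A.rank := by
      rw [Matrix.rank_eq_finrank_span_cols, Matrix.rank_eq_finrank_span_cols]
      apply Submodule.finrank_mono
      apply Submodule.span_mono
      rintro v ⟨i, rfl⟩
      exact ⟨σ i, (hcols i).symm⟩
    have hub : A.rank ≤ s := le_trans A.rank_le_card_height (by simp)
    omega
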